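/- For every positive integer n, the derivative of the Riemann zeta function satisfies ζ'(−2n) = (−1)^n · (2n)! · ζ(2n+1) / (2 · (2π)^{2n}). -/

import Mathlib

open Real

/-- For every positive integer `n`, the derivative of the Riemann zeta
function satisfies `ζ'(-2n) = (-1)^n (2n)! ζ(2n+1) / (2 (2π)^(2n))`. -/
theorem riemannZeta_deriv_neg_even (n : ℕ) (hn : 0 < n) :
    deriv riemannZeta (-(2 * (n : ℂ))) =
      (-1) ^ n * (Nat.factorial (2 * n) : ℂ) * riemannZeta (2 * (n : ℂ) + 1) /
        (2 * (2 * (π : ℂ)) ^ (2 * n)) := by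
  set s₀ : ℂ := 2 * (n : ℂ) + 1 with hs₀
  have hre : s₀.re = 2 * n + 1 := by
    simp [hs₀]
  have htwo_pi : (2 * (π : ℂ)) ≠ 0 := by
    simp [Real.pi_ne_zero]
  have hopen : {s : ℂ | 2 < s.re} ∈ nhds s₀ := by
    refine (isOpen_lt continuous_const Complex.continuous_re).mem_nhds ?_
    simp only [Set.mem_setOf_eq, hre]
    have : (1 : ℝ) ≤ n := by exact_mod_cast hn
    linarith
  have heq : (fun s => riemannZeta (1 - s)) =ᶠ[nhds s₀]
      fun s => 2 * (2 * (π : ℂ)) ^ (-s) * Complex.Gamma s *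
        Complex.cos ((π : ℂ) * s / 2) * riemannZeta s := by
    filter_upwards [hopen] with s hs
    refine riemannZeta_one_sub (fun m hm => ?_) (fun h1 => ?_)
    · rw [hm] at hs
      simp only [Set.mem_setOf_eq, Complex.neg_re, Complex.natCast_re] at hs
      have : (0 : ℝ) ≤ m := Nat.cast_nonneg m
      linarith
    · rw [h1] at hs
      simp at hs
  -- derivatives
  have hs₀ne1 : s₀ ≠ 1 := by
    intro h
    have := congrArg Complex.re h
    rw [hre] at this
    simp at this
    have : (1 : ℝ) ≤ n := by exact_mod_cast hn
    linarith
  have h1s : (1 : ℂ) - s₀ = -(2 * (n : ℂ)) := by rw [hs₀]; ring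
  have h1sne1 : (1 : ℂ) - s₀ ≠ 1 := by
    rw [h1s]
    intro h
    have := congrArg Complex.re h
    simp at this
    have : (1 : ℝ) ≤ n := by exact_mod_cast hn
    linarith
  have hL : HasDerivAt (fun s => riemannZeta (1 - s))
      (deriv riemannZeta (1 - s₀) * (-1)) s₀ :=
    (differentiableAt_riemannZeta h1sne1).hasDerivAt.comp s₀
      ((hasDerivAt_id s₀).const_sub 1)
  have hΓne : ∀ m : ℕ, s₀ ≠ -m := by
    intro m h
    have := congrArg Complex.re h
    rw [hre] at this
    simp at this
    have h0 : (0 : ℝ) ≤ (m : ℝ) := Nat.cast_nonneg m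
    have h1 : (0 : ℝ) ≤ (n : ℝ) := Nat.cast_nonneg n
    linarith
  have hA : HasDerivAt (fun s : ℂ => (2 * (π : ℂ)) ^ (-s))
      ((2 * (π : ℂ)) ^ (-s₀) * Complex.log (2 * (π : ℝ)) * (-1)) s₀ :=
    HasDerivAt.const_cpow (hasDerivAt_id s₀).neg (Or.inl htwo_pi)
  have hΓ : HasDerivAt Complex.Gamma (deriv Complex.Gamma s₀) s₀ :=
    (Complex.differentiableAt_Gamma s₀ hΓne).hasDerivAt
  have hlin : HasDerivAt (fun s : ℂ => (π : ℂ) * s / 2) ((π : ℂ) / 2) s₀ := by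
    simpa using ((hasDerivAt_id s₀).const_mul (π : ℂ)).div_const 2
  have hC : HasDerivAt (fun s : ℂ => Complex.cos ((π : ℂ) * s / 2))
      (-Complex.sin ((π : ℂ) * s₀ / 2) * ((π : ℂ) / 2)) s₀ :=
    (Complex.hasDerivAt_cos _).comp s₀ hlin
  have hZ : HasDerivAt riemannZeta (deriv riemannZeta s₀) s₀ :=
    (differentiableAt_riemannZeta hs₀ne1).hasDerivAt
  have hg := (((hA.const_mul (2 : ℂ)).mul hΓ).mul hC).mul hZ
  -- value computations
  have hcos : Complex.cos ((π : ℂ) * s₀ / 2) = 0 := by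
    have harg : (π : ℂ) * s₀ / 2 = (n : ℂ) * (π : ℂ) + (π : ℂ) / 2 := by
      rw [hs₀]; ring
    rw [harg, Complex.cos_add_pi_div_two, Complex.sin_nat_mul_pi, neg_zero]
  have hsin : Complex.sin ((π : ℂ) * s₀ / 2) = (-1) ^ n := by
    have harg : (π : ℂ) * s₀ / 2 = (n : ℂ) * (π : ℂ) + (π : ℂ) / 2 := by
      rw [hs₀]; ring
    rw [harg, Complex.sin_add_pi_div_two]
    have : ((n : ℂ) * (π : ℂ)) = ((n * π : ℝ) : ℂ) := by push_cast; ring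
    rw [this, ← Complex.ofReal_cos]
    have : Real.cos (n * π) = (-1) ^ n := by
      have := Real.cos_nat_mul_pi_sub 0 n
      simpa using this
    rw [this]
    push_cast; ring
  have hΓval : Complex.Gamma s₀ = (Nat.factorial (2 * n) : ℂ) := by
    have : s₀ = ((2 * n : ℕ) : ℂ) + 1 := by rw [hs₀]; push_cast; ring
    rw [this, Complex.Gamma_nat_eq_factorial]
  have hAval : (2 * (π : ℂ)) ^ (-s₀) = ((2 * (π : ℂ)) ^ (2 * n + 1))⁻¹ := by
    have : -s₀ = -(((2 * n + 1 : ℕ) : ℂ)) := by rw [hs₀]; push_cast; ring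
    rw [this, Complex.cpow_neg, Complex.cpow_natCast]
  -- assemble
  have hd1 := hL.deriv
  have hd2 : deriv (fun s => 2 * (2 * (π : ℂ)) ^ (-s) * Complex.Gamma s *
      Complex.cos ((π : ℂ) * s / 2) * riemannZeta s) s₀ = _ := hg.deriv
  simp only [Pi.mul_apply] at hd2
  have hderiv_eq := heq.deriv_eq
  rw [hd1] at hderiv_eq
  rw [hd2] at hderiv_eq
  rw [hcos, hsin, hΓval, hAval, h1s] at hderiv_eq
  have hpow : (2 * (π : ℂ)) ^ (2 * n + 1) = (2 * (π : ℂ)) ^ (2 * n) * (2 * (π : ℂ)) :=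
    pow_succ _ _
  have hpne : (2 * (π : ℂ)) ^ (2 * n) ≠ 0 := pow_ne_zero _ htwo_pi
  have hpne1 : (2 * (π : ℂ)) ^ (2 * n + 1) ≠ 0 := pow_ne_zero _ htwo_pi
  have hπne : (π : ℂ) ≠ 0 := by simp [Real.pi_ne_zero]
  field_simp [hpow] at hderiv_eq
  have hne : ((2 * (π : ℂ)) ^ (2 * n) * (2 * (π : ℂ)) * 2) ≠ 0 :=
    mul_ne_zero (mul_ne_zero hpne htwo_pi) two_ne_zero
  have hne2 : (2 * (2 * (π : ℂ)) ^ (2 * n)) ≠ 0 := mul_ne_zero two_ne_zero hpne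
  rw [eq_div_iff hne2]
  rw [hpow] at hderiv_eq
  apply mul_left_cancel₀ hπne
  linear_combination -hderiv_eq
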